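/- Let R and S be Dyck paths of the same length 2n, both avoiding three consecutive north steps NNN, and let P = φ(R), Q = φ(S) be the corresponding Motzkin paths. Then P ≤_M Q in the partial order on Motzkin paths if and only if R ≤_D S in the Tamari order on Dyck paths and Type(R) = Type(S). -/

import Mathlib

/-- Steps: north `N = (0,1)`, east `E = (1,0)`, diagonal `D = (1,1)`. -/
inductive MStep : Type
  | N | E | D
  deriving DecidableEq

/-- The contribution of a step to the height `y - x` above the diagonal. -/
def MStep.hdiff : MStep → ℤ
  | .N => 1
  | .E => -1
  | .D => 0

/-- The total height change `y - x` along a word of steps. -/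
def wsum (p : List MStep) : ℤ := (p.map MStep.hdiff).sum

/-- A (nonempty) Motzkin path: starts at the origin, never goes below the
diagonal `y = x`, and ends on the diagonal. -/
def IsMotzkin (p : List MStep) : Prop :=
  p ≠ [] ∧ (∀ q, q <+: p → 0 ≤ wsum q) ∧ wsum p = 0

/-- A Dyck path is a Motzkin path with no diagonal step. -/
def IsDyck (p : List MStep) : Prop := IsMotzkin p ∧ MStep.D ∉ p

/-- A path is primitive if it touches the diagonal only at its endpoints. -/
def IsPrimitive (p : List MStep) : Prop :=
  IsMotzkin p ∧ ∀ q, q <+: p → q ≠ [] → q ≠ p → 0 < wsum q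

/-- Covering relation for the Tamari-type order on Motzkin paths:
`Q` covers `P` iff `P = P₁·E·P₂·P₃` and `Q = P₁·P₂·E·P₃` with `P₂` a nonempty
primitive Motzkin path. -/
def MCover (P Q : List MStep) : Prop :=
  ∃ P₁ P₂ P₃ : List MStep, IsMotzkin P₂ ∧ IsPrimitive P₂ ∧
    P = P₁ ++ [MStep.E] ++ P₂ ++ P₃ ∧ Q = P₁ ++ P₂ ++ [MStep.E] ++ P₃

/-- Covering relation of the Tamari order on Dyck paths. -/
def DCover (P Q : List MStep) : Prop :=
  ∃ P₁ P₂ P₃ : List MStep, IsDyck P₂ ∧ IsPrimitive P₂ ∧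
    P = P₁ ++ [MStep.E] ++ P₂ ++ P₃ ∧ Q = P₁ ++ P₂ ++ [MStep.E] ++ P₃

/-- The partial order `≤_M` on Motzkin paths. -/
def MLE : List MStep → List MStep → Prop := Relation.ReflTransGen MCover

/-- The Tamari order `≤_D` on Dyck paths. -/
def DLE : List MStep → List MStep → Prop := Relation.ReflTransGen DCover

/-- Heights of the diagonal steps along a path, starting from height `h`. -/
def clsFrom : List MStep → ℤ → List ℤ
  | [], _ => []
  | .N :: rest, h => clsFrom rest (h + 1)
  | .E :: rest, h => clsFrom rest h
  | .D :: rest, h => (h + 1) :: clsFrom rest (h + 1)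

/-- The class of a Motzkin path: the sequence of heights (ending `y`-coordinates)
of its diagonal steps, in the order they occur. -/
def cls (p : List MStep) : List ℤ := clsFrom p 0

/-- A path avoids `NNN` if it has no three consecutive north steps. -/
def AvoidsNNN (p : List MStep) : Prop := ¬ ([MStep.N, MStep.N, MStep.N] <:+: p)

/-- Callan's bijection `φ`: replace each factor `NE` by `D` and each factor
`NNE` by `N`, leaving remaining east steps unchanged. -/
def phi : List MStep → List MStep
  | [] => []
  | .N :: .N :: .E :: rest => .N :: phi rest
  | .N :: .E :: rest => .D :: phi rest
  | s :: rest => s :: phi rest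

/-- The inverse of `φ`: replace each `D` by `NE` and each `N` by `NNE`. -/
def psi : List MStep → List MStep
  | [] => []
  | .N :: rest => .N :: .N :: .E :: psi rest
  | .D :: rest => .N :: .E :: psi rest
  | .E :: rest => .E :: psi rest

/-- For each north step of the path (in order), record `N` if it is immediately
followed by an east step and `E` otherwise. -/
def typeRaw : List MStep → List MStep
  | [] => []
  | .N :: rest => (if rest.head? = some MStep.E then MStep.N else MStep.E) :: typeRaw rest
  | _ :: rest => typeRaw rest

/-- The type of a Dyck path of length `2n`: the word of length `n - 1` whose
`i`-th letter is `N` iff the `i`-th north step is immediately followed by an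
east step (the letter of the last north step is dropped). -/
def typeW (p : List MStep) : List MStep := (typeRaw p).dropLast

/-- `ds p` is the number of north steps of `p` that are neither immediately
preceded nor immediately followed by another north step. -/
def ds (p : List MStep) : ℕ :=
  ((Finset.range p.length).filter (fun i =>
    p[i]? = some MStep.N ∧ p[i + 1]? ≠ some MStep.N ∧
      (i = 0 ∨ p[i - 1]? ≠ some MStep.N))).card

/-- The number of contacts of a path with the diagonal `y = x` (lattice points
of the path lying on the diagonal, endpoints included). -/
def cont (p : List MStep) : ℕ :=
  ((Finset.range (p.length + 1)).filter (fun i => wsum (p.take i) = 0)).card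

-- batch 1: wsum and psi basics
@[simp] lemma wsum_nil : wsum [] = 0 := rfl
@[simp] lemma wsum_cons (a : MStep) (l : List MStep) : wsum (a :: l) = a.hdiff + wsum l := by
  simp [wsum]
@[simp] lemma wsum_append (a b : List MStep) : wsum (a ++ b) = wsum a + wsum b := by
  simp [wsum]

lemma psi_append (a b : List MStep) : psi (a ++ b) = psi a ++ psi b := by
  induction a with
  | nil => rfl
  | cons x r ih => cases x <;> simp [psi, ih]

@[simp] lemma psi_eq_nil_iff (a : List MStep) : psi a = [] ↔ a = [] := by
  cases a with
  | nil => simp [psi]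
  | cons x r => cases x <;> simp [psi]

@[simp] lemma wsum_psi (a : List MStep) : wsum (psi a) = wsum a := by
  induction a with
  | nil => rfl
  | cons x r ih => cases x <;> simp [psi, ih, MStep.hdiff]

lemma psi_noD (a : List MStep) : MStep.D ∉ psi a := by
  induction a with
  | nil => simp [psi]
  | cons x r ih => cases x <;> simp [psi, ih]

lemma psi_inj : ∀ {a b : List MStep}, psi a = psi b → a = b := by
  intro a
  induction a with
  | nil => intro b h; cases b with
    | nil => rfl
    | cons y r => cases y <;> simp [psi] at h
  | cons x r ih =>
    intro b h
    cases b with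
    | nil => cases x <;> simp [psi] at h
    | cons y s =>
      cases x <;> cases y <;> simp [psi] at h <;> rw [ih h]
-- batch 2: GoodP, psi_phi, phi splitting
def GoodP (p : List MStep) : Prop :=
  MStep.D ∉ p ∧ AvoidsNNN p ∧ p.getLast? ≠ some MStep.N

lemma avoids_of_infix {p q : List MStep} (h : p <:+: q) (hq : AvoidsNNN q) : AvoidsNNN p :=
  fun hn => hq (hn.trans h)

lemma avoids_cons {x : MStep} {r : List MStep} (h : AvoidsNNN (x :: r)) : AvoidsNNN r :=
  avoids_of_infix ((List.suffix_cons x r).isInfix) h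

lemma getLast?_ne_tail {x : MStep} {r : List MStep} (hr : r ≠ [])
    (h : (x :: r).getLast? ≠ some MStep.N) : r.getLast? ≠ some MStep.N := by
  cases r with
  | nil => exact absurd rfl hr
  | cons y s => rwa [List.getLast?_cons_cons] at h

lemma goodP_cons {x : MStep} {r : List MStep} (h : GoodP (x :: r)) : GoodP r := by
  obtain ⟨h1, h2, h3⟩ := h
  refine ⟨fun hm => h1 (List.mem_cons_of_mem _ hm), avoids_cons h2, ?_⟩
  cases r with
  | nil => simp
  | cons y s => rwa [List.getLast?_cons_cons] at h3

lemma nnn_prefix_infix {r : List MStep} :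
    [MStep.N, MStep.N, MStep.N] <:+: (MStep.N :: MStep.N :: MStep.N :: r) :=
  (List.prefix_append _ r).isInfix

theorem psi_phi : ∀ p : List MStep, GoodP p → psi (phi p) = p
  | [], _ => rfl
  | .E :: r, h => by
      have := psi_phi r (goodP_cons h)
      simp [phi, psi, this]
  | .D :: r, h => absurd List.mem_cons_self h.1
  | .N :: .N :: .E :: r, h => by
      have := psi_phi r (goodP_cons (goodP_cons (goodP_cons h)))
      simp [phi, psi, this]
  | .N :: .E :: r, h => by
      have := psi_phi r (goodP_cons (goodP_cons h))
      simp [phi, psi, this]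
  | [.N], h => absurd rfl h.2.2
  | [.N, .N], h => absurd rfl h.2.2
  | .N :: .D :: r, h => absurd (by simp) h.1
  | .N :: .N :: .D :: r, h => absurd (by simp) h.1
  | .N :: .N :: .N :: r, h => absurd nnn_prefix_infix h.2.1

lemma last_not_N_nnn_split {a : List MStep} (ha : a.getLast? ≠ some MStep.N) :
    ∀ {b : List MStep}, [MStep.N, MStep.N, MStep.N] <:+: a ++ b →
      [MStep.N, MStep.N, MStep.N] <:+: a ∨ [MStep.N, MStep.N, MStep.N] <:+: b := by
  induction a with
  | nil => intro b h; exact Or.inr h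
  | cons x a' ih =>
    intro b h
    rw [List.cons_append, List.infix_cons_iff] at h
    rcases h with h | h
    · -- prefix case
      rcases List.cons_prefix_cons.1 h with ⟨rfl, h2⟩
      cases a' with
      | nil => exact absurd rfl ha
      | cons y a'' =>
        rcases List.cons_prefix_cons.1 h2 with ⟨rfl, h3⟩
        cases a'' with
        | nil => exact absurd rfl ha
        | cons z a''' =>
          rcases List.cons_prefix_cons.1 h3 with ⟨rfl, _⟩
          exact Or.inl nnn_prefix_infix
    · rcases a' with _ | ⟨y, a''⟩
      · exact Or.inr h
      · rcases ih (getLast?_ne_tail (by simp) ha) h with h | h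
        · exact Or.inl (h.trans (List.suffix_cons x _).isInfix)
        · exact Or.inr h

lemma goodP_append {a b : List MStep} (ha : GoodP a) (hb : GoodP b) : GoodP (a ++ b) := by
  obtain ⟨ha1, ha2, ha3⟩ := ha
  obtain ⟨hb1, hb2, hb3⟩ := hb
  refine ⟨by simp [ha1, hb1], ?_, ?_⟩
  · intro h
    rcases last_not_N_nnn_split ha3 h with h | h
    · exact ha2 h
    · exact hb2 h
  · cases b with
    | nil => simpa using ha3
    | cons y s => rwa [List.getLast?_append_of_ne_nil _ (by simp)]

lemma phi_split {a b : List MStep} (ha : GoodP a) (hb : GoodP b) :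
    phi (a ++ b) = phi a ++ phi b := by
  apply psi_inj
  rw [psi_phi _ (goodP_append ha hb), psi_append, psi_phi _ ha, psi_phi _ hb]
-- batch 3: psi prefix structure, MCover → DCover, tproj invariance
lemma psi_prefix_mono {a b : List MStep} (h : a <+: b) : psi a <+: psi b := by
  obtain ⟨r, rfl⟩ := h
  exact ⟨psi r, (psi_append a r).symm⟩

lemma prefix_cons_cases {α : Type*} {q : List α} {x : α} {l : List α} (h : q <+: x :: l) :
    q = [] ∨ ∃ q', q = x :: q' ∧ q' <+: l := by
  cases q with
  | nil => exact Or.inl rfl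
  | cons y q' =>
    rcases List.cons_prefix_cons.1 h with ⟨rfl, h2⟩
    exact Or.inr ⟨q', rfl, h2⟩

lemma psi_prefix : ∀ (x : List MStep) {q : List MStep}, q <+: psi x →
    (∃ y, y <+: x ∧ psi y = q) ∨ (∃ y, y <+: x ∧ y ≠ x ∧ wsum (psi y) < wsum q) := by
  intro x
  induction x with
  | nil =>
    intro q hq
    rw [show psi [] = [] from rfl, List.prefix_nil] at hq
    exact Or.inl ⟨[], List.nil_prefix, by simp [hq, psi]⟩
  | cons s r ih =>
    intro q hq
    have hne : s :: r ≠ [] := by simp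
    cases s with
    | N =>
      rw [show psi (.N :: r) = .N :: .N :: .E :: psi r from rfl] at hq
      rcases prefix_cons_cases hq with rfl | ⟨q1, rfl, hq1⟩
      · exact Or.inl ⟨[], List.nil_prefix, rfl⟩
      rcases prefix_cons_cases hq1 with rfl | ⟨q2, rfl, hq2⟩
      · exact Or.inr ⟨[], List.nil_prefix, (Ne.symm hne), by simp [psi, MStep.hdiff]⟩
      rcases prefix_cons_cases hq2 with rfl | ⟨q3, rfl, hq3⟩
      · exact Or.inr ⟨[], List.nil_prefix, (Ne.symm hne), by simp [psi, MStep.hdiff]⟩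
      rcases ih hq3 with ⟨y, hy, rfl⟩ | ⟨y, hy, hyne, hlt⟩
      · exact Or.inl ⟨.N :: y, List.cons_prefix_cons.2 ⟨rfl, hy⟩, rfl⟩
      · refine Or.inr ⟨.N :: y, List.cons_prefix_cons.2 ⟨rfl, hy⟩, by simpa using hyne, ?_⟩
        simp only [psi, wsum_cons, MStep.hdiff] at *
        omega
    | D =>
      rw [show psi (.D :: r) = .N :: .E :: psi r from rfl] at hq
      rcases prefix_cons_cases hq with rfl | ⟨q1, rfl, hq1⟩
      · exact Or.inl ⟨[], List.nil_prefix, rfl⟩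
      rcases prefix_cons_cases hq1 with rfl | ⟨q2, rfl, hq2⟩
      · exact Or.inr ⟨[], List.nil_prefix, (Ne.symm hne), by simp [psi, MStep.hdiff]⟩
      rcases ih hq2 with ⟨y, hy, rfl⟩ | ⟨y, hy, hyne, hlt⟩
      · exact Or.inl ⟨.D :: y, List.cons_prefix_cons.2 ⟨rfl, hy⟩, rfl⟩
      · refine Or.inr ⟨.D :: y, List.cons_prefix_cons.2 ⟨rfl, hy⟩, by simpa using hyne, ?_⟩
        simp only [psi, wsum_cons, MStep.hdiff] at *
        omega
    | E =>
      rw [show psi (.E :: r) = .E :: psi r from rfl] at hq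
      rcases prefix_cons_cases hq with rfl | ⟨q1, rfl, hq1⟩
      · exact Or.inl ⟨[], List.nil_prefix, rfl⟩
      rcases ih hq1 with ⟨y, hy, rfl⟩ | ⟨y, hy, hyne, hlt⟩
      · exact Or.inl ⟨.E :: y, List.cons_prefix_cons.2 ⟨rfl, hy⟩, rfl⟩
      · refine Or.inr ⟨.E :: y, List.cons_prefix_cons.2 ⟨rfl, hy⟩, by simpa using hyne, ?_⟩
        simp only [psi, wsum_cons, MStep.hdiff] at *
        omega

lemma psi_primitive {p : List MStep} (hp : IsPrimitive p) :
    IsDyck (psi p) ∧ IsPrimitive (psi p) := by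
  obtain ⟨⟨hne, hpre, hz⟩, hprim⟩ := hp
  have hmot : IsMotzkin (psi p) := by
    refine ⟨by simpa using hne, ?_, by simpa using hz⟩
    intro q hq
    rcases psi_prefix p hq with ⟨y, hy, rfl⟩ | ⟨y, hy, hyne, hlt⟩
    · rw [wsum_psi]; exact hpre y hy
    · have := hpre y hy
      rw [wsum_psi] at hlt
      omega
  refine ⟨⟨hmot, psi_noD p⟩, hmot, ?_⟩
  intro q hq hqne hqfull
  rcases psi_prefix p hq with ⟨y, hy, rfl⟩ | ⟨y, hy, hyne, hlt⟩
  · have hyne : y ≠ [] := fun h => hqne (by simp [h, psi])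
    have hyfull : y ≠ p := fun h => hqfull (by rw [h])
    rw [wsum_psi]; exact hprim y hy hyne hyfull
  · have := hpre y hy
    rw [wsum_psi] at hlt
    omega

lemma mcover_dcover {P Q : List MStep} (h : MCover P Q) : DCover (psi P) (psi Q) := by
  obtain ⟨P₁, P₂, P₃, _, hprim, rfl, rfl⟩ := h
  obtain ⟨hdy, hpr⟩ := psi_primitive hprim
  exact ⟨psi P₁, psi P₂, psi P₃, hdy, hpr, by simp [psi_append, psi], by simp [psi_append, psi]⟩

-- tproj: the type word of psi, invariant under MCover
def tproj : List MStep → List MStep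
  | [] => []
  | .N :: r => .E :: .N :: tproj r
  | .D :: r => .N :: tproj r
  | .E :: r => tproj r

lemma tproj_append (a b : List MStep) : tproj (a ++ b) = tproj a ++ tproj b := by
  induction a with
  | nil => rfl
  | cons x r ih => cases x <;> simp [tproj, ih]

lemma typeRaw_psi (p : List MStep) : typeRaw (psi p) = tproj p := by
  induction p with
  | nil => rfl
  | cons x r ih =>
    cases x <;> simp only [psi, tproj] <;>
      · simp only [typeRaw, List.head?]
        cases hr : psi r with
        | nil => simp [typeRaw, ← ih, hr]
        | cons z s =>
          have hz : z ≠ MStep.D := fun h => psi_noD r (h ▸ (hr ▸ (List.mem_cons_self (a := z) (l := s))))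
          cases z <;> simp [typeRaw, ← ih, hr]
-- batch 4: typeRawF and the pointwise order on type words
def typeRawF : List MStep → Option MStep → List MStep
  | [], _ => []
  | .N :: rest, h =>
      (if (rest.head?.or h) = some MStep.E then MStep.N else MStep.E) :: typeRawF rest h
  | _ :: rest, h => typeRawF rest h

lemma typeRaw_eq_typeRawF (p : List MStep) : typeRaw p = typeRawF p none := by
  induction p with
  | nil => rfl
  | cons x r ih => cases x <;> simp [typeRaw, typeRawF, ih, Option.or_none]

lemma typeRaw_append (a b : List MStep) :
    typeRaw (a ++ b) = typeRawF a b.head? ++ typeRaw b := by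
  induction a with
  | nil => simp [typeRawF]
  | cons x r ih =>
    cases x <;>
      simp only [List.cons_append, typeRaw, typeRawF, ih, ← List.head?_append, List.append_eq]

lemma typeRawF_indep {a : List MStep} (ha : a.getLast? ≠ some MStep.N) (h h' : Option MStep) :
    typeRawF a h = typeRawF a h' := by
  induction a with
  | nil => rfl
  | cons x r ih =>
    cases r with
    | nil => cases x <;> simp [typeRawF] <;> exact absurd rfl ha
    | cons y s =>
      have hr := getLast?_ne_tail (by simp) ha
      cases x <;> simp [typeRawF, ih hr]

lemma typeRawF_length (a : List MStep) (h h' : Option MStep) :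
    (typeRawF a h).length = (typeRawF a h').length := by
  induction a with
  | nil => rfl
  | cons x r ih => cases x <;> simp [typeRawF, ih]

lemma typeRawF_eq_nil (a : List MStep) (h : Option MStep) :
    typeRawF a h = [] ↔ MStep.N ∉ a := by
  induction a with
  | nil => simp [typeRawF]
  | cons x r ih => cases x <;> simp [typeRawF, ih]

lemma typeRawF_getLast {a : List MStep} (ha : a.getLast? = some MStep.N) (h : Option MStep) :
    (typeRawF a h).getLast? = some (if h = some MStep.E then MStep.N else MStep.E) := by
  induction a with
  | nil => simp at ha
  | cons x r ih =>
    cases r with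
    | nil =>
      simp at ha
      subst ha
      simp [typeRawF, Option.or]
      split_ifs <;> simp_all
    | cons y s =>
      rw [List.getLast?_cons_cons] at ha
      have hrne : typeRawF (y :: s) h ≠ [] := by
        rw [Ne, typeRawF_eq_nil]
        simp only [not_not]
        have : MStep.N ∈ (y :: s).getLast? := ha ▸ rfl
        exact List.mem_of_mem_getLast? (by rw [ha]; simp)
      cases x
      case N =>
        show ([(if _ then _ else _)] ++ typeRawF (y :: s) h).getLast? = _
        rw [List.getLast?_append_of_ne_nil _ hrne]
        exact ih ha
      case E => exact ih ha
      case D => exact ih ha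

-- the pointwise order
def relT (a b : MStep) : Prop := a = b ∨ (a = MStep.E ∧ b = MStep.N)

def LeT : List MStep → List MStep → Prop := List.Forall₂ relT

lemma relT_refl (a : MStep) : relT a a := Or.inl rfl

lemma leT_refl (l : List MStep) : LeT l l := by
  induction l with
  | nil => exact List.Forall₂.nil
  | cons x r ih => exact List.Forall₂.cons (relT_refl x) ih

lemma leT_trans : ∀ {a b c : List MStep}, LeT a b → LeT b c → LeT a c := by
  intro a b c h1
  induction h1 generalizing c with
  | nil => intro h2; cases h2; exact List.Forall₂.nil
  | cons hr _ ih =>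
    intro h2
    cases h2 with
    | cons hr2 ht2 =>
      refine List.Forall₂.cons ?_ (ih ht2)
      rcases hr with rfl | ⟨rfl, rfl⟩ <;> rcases hr2 with h | ⟨h1, h2⟩ <;> simp_all [relT]

lemma leT_antisymm : ∀ {a b : List MStep}, LeT a b → LeT b a → a = b := by
  intro a b h1
  induction h1 with
  | nil => intro _; rfl
  | cons hr _ ih =>
    intro h2
    cases h2 with
    | cons hr2 ht2 =>
      rw [ih ht2]
      rcases hr with h | ⟨h1, h2⟩ <;> rcases hr2 with h' | ⟨h1', h2'⟩ <;> simp_all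

lemma leT_append {a b c d : List MStep} (h1 : LeT a b) (h2 : LeT c d) :
    LeT (a ++ c) (b ++ d) := List.rel_append h1 h2

lemma typeRawF_le (a : List MStep) :
    LeT (typeRawF a (some MStep.N)) (typeRawF a (some MStep.E)) := by
  induction a with
  | nil => exact List.Forall₂.nil
  | cons x r ih =>
    cases x <;> simp only [typeRawF]
    case N =>
      refine List.Forall₂.cons ?_ ih
      cases r with
      | nil => simp [Option.or, relT]
      | cons y s => cases y <;> simp [Option.or, relT]
    all_goals exact ih
-- batch 5: structure of primitive Dyck paths, DCover computations
lemma prim_struct {p : List MStep} (hd : IsDyck p) (hp : IsPrimitive p) :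
    p.head? = some MStep.N ∧ p.getLast? = some MStep.E := by
  obtain ⟨⟨hne, hpre, hz⟩, hnoD⟩ := hd
  obtain ⟨-, hprim⟩ := hp
  obtain ⟨x, t, rfl⟩ : ∃ x t, p = x :: t := by
    cases p with
    | nil => exact absurd rfl hne
    | cons x t => exact ⟨x, t, rfl⟩
  have htne : t ≠ [] := by
    rintro rfl
    cases x <;> simp [wsum, MStep.hdiff] at hz hnoD
  have hx : x = MStep.N := by
    have h1 : [x] <+: x :: t := ⟨t, rfl⟩
    have h2 : ([x] : List MStep) ≠ x :: t := by simp [htne]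
    have := hprim [x] h1 (by simp) h2
    cases x <;> simp [wsum, MStep.hdiff] at this hnoD ⊢
  subst hx
  refine ⟨rfl, ?_⟩
  set p := MStep.N :: t with hpdef
  have hpne : p ≠ [] := by simp [hpdef]
  have hdlne : p.dropLast ≠ [] := by
    simp [hpdef, List.dropLast_cons_of_ne_nil htne]
  have hdl : 0 < wsum p.dropLast := by
    refine hprim _ (List.dropLast_prefix p) hdlne ?_
    intro h
    have := congrArg List.length h
    rw [List.length_dropLast] at this
    have : p.length ≠ 0 := by simp [hpdef]
    omega
  have hsplit : p.dropLast ++ [p.getLast hpne] = p := List.dropLast_append_getLast hpne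
  have hws : wsum p.dropLast + (p.getLast hpne).hdiff = 0 := by
    have := congrArg wsum hsplit
    simp [wsum_append, wsum_cons] at this
    rw [← this] at hz
    linarith [hz]
  have hlast : p.getLast hpne = MStep.E := by
    have hmem : p.getLast hpne ∈ p := List.getLast_mem hpne
    cases hlg : p.getLast hpne <;> rw [hlg] at hws hmem <;>
      simp [MStep.hdiff] at hws hmem ⊢ <;> first | omega | exact absurd hmem hnoD
  rw [List.getLast?_eq_getLast hpne, hlast]

lemma prefix_append_cases {α : Type*} : ∀ (a : List α) {q b : List α}, q <+: a ++ b →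
    q <+: a ∨ ∃ r, r <+: b ∧ q = a ++ r := by
  intro a
  induction a with
  | nil => intro q b h; exact Or.inr ⟨q, h, rfl⟩
  | cons x a' ih =>
    intro q b h
    rcases prefix_cons_cases h with rfl | ⟨q', rfl, hq'⟩
    · exact Or.inl List.nil_prefix
    rcases ih hq' with h1 | ⟨r, hr, rfl⟩
    · exact Or.inl (List.cons_prefix_cons.2 ⟨rfl, h1⟩)
    · exact Or.inr ⟨r, hr, rfl⟩

lemma dyck_of_dcover {T U : List MStep} (hT : IsDyck T) (h : DCover T U) : IsDyck U := by
  obtain ⟨P₁, P₂, P₃, hdy, hprim, rfl, rfl⟩ := h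
  obtain ⟨⟨hne, hpre, hz⟩, hnoD⟩ := hT
  obtain ⟨⟨-, hpre2, hz2⟩, -⟩ := hdy
  constructor
  constructor
  · simp
  constructor
  · -- prefixes of U are nonnegative
    intro q hq
    rw [List.append_assoc, List.append_assoc] at hq
    rcases prefix_append_cases P₁ hq with h1 | ⟨r, hr, rfl⟩
    · exact hpre q (h1.trans (by simp [List.prefix_append, List.append_assoc]))
    rcases prefix_append_cases P₂ hr with h1 | ⟨s, hs, rfl⟩
    · have h2 : (0:ℤ) ≤ wsum P₁ := hpre P₁ (by simp [List.prefix_append, List.append_assoc])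
      have h3 := hpre2 _ h1
      simp only [wsum_append]
      omega
    rcases prefix_cons_cases hs with rfl | ⟨s', rfl, hs'⟩
    · have h2 : (0:ℤ) ≤ wsum P₁ := hpre P₁ (by simp [List.prefix_append, List.append_assoc])
      simp only [wsum_append, hz2]
      simpa using h2
    · have h2 : (0:ℤ) ≤ wsum (P₁ ++ [MStep.E] ++ P₂ ++ s') := by
        refine hpre _ ?_
        obtain ⟨u, rfl⟩ := hs'
        exact ⟨u, by simp [List.append_assoc]⟩
      simp only [wsum_append, wsum_cons, wsum_nil, hz2] at h2 ⊢
      simp [MStep.hdiff] at h2 ⊢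
      omega
  · -- total sum
    simp only [wsum_append] at hz ⊢
    omega
  · -- no D
    intro hmem
    apply hnoD
    simp only [List.mem_append] at hmem ⊢
    tauto
-- batch 6: typeRaw of covers; antitone along DLE
lemma cover_typeRaw_eqs {P₁ P₂ P₃ : List MStep} (hd : IsDyck P₂) (hp : IsPrimitive P₂) :
    typeRaw (P₁ ++ [MStep.E] ++ P₂ ++ P₃) =
      typeRawF P₁ (some MStep.E) ++ (typeRawF P₂ P₃.head? ++ typeRaw P₃) ∧
    typeRaw (P₁ ++ P₂ ++ [MStep.E] ++ P₃) =
      typeRawF P₁ (some MStep.N) ++ (typeRawF P₂ P₃.head? ++ typeRaw P₃) := by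
  obtain ⟨hhead, hlast⟩ := prim_struct hd hp
  have hlastne : P₂.getLast? ≠ some MStep.N := by rw [hlast]; simp
  constructor
  · rw [show P₁ ++ [MStep.E] ++ P₂ ++ P₃ = P₁ ++ ([MStep.E] ++ (P₂ ++ P₃)) by
      simp [List.append_assoc]]
    rw [typeRaw_append]
    have h1 : typeRaw ([MStep.E] ++ (P₂ ++ P₃)) = typeRaw (P₂ ++ P₃) := by
      simp [typeRaw]
    rw [h1, typeRaw_append]
    congr 1
  · rw [show P₁ ++ P₂ ++ [MStep.E] ++ P₃ = P₁ ++ (P₂ ++ ([MStep.E] ++ P₃)) by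
      simp [List.append_assoc]]
    rw [typeRaw_append, typeRaw_append]
    have h1 : typeRaw ([MStep.E] ++ P₃) = typeRaw P₃ := by simp [typeRaw]
    have h2 : (P₂ ++ ([MStep.E] ++ P₃)).head? = some MStep.N := by
      rw [List.head?_append, hhead]; rfl
    have h3 : ([MStep.E] ++ P₃).head? = some MStep.E := rfl
    rw [h1, h2, h3, typeRawF_indep hlastne (some MStep.E) P₃.head?]

lemma dcover_typeRaw_le {T U : List MStep} (h : DCover T U) : LeT (typeRaw U) (typeRaw T) := by
  obtain ⟨P₁, P₂, P₃, hdy, hprim, rfl, rfl⟩ := h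
  obtain ⟨h1, h2⟩ := cover_typeRaw_eqs hdy hprim
  rw [h1, h2]
  exact leT_append (typeRawF_le P₁) (leT_refl _)

lemma dle_typeRaw_le {T U : List MStep} (h : DLE T U) : LeT (typeRaw U) (typeRaw T) := by
  induction h with
  | refl => exact leT_refl _
  | tail _ hcov ih => exact leT_trans (dcover_typeRaw_le hcov) ih

-- key: in a cover with equal typeRaw, P₁ does not end with N
lemma cover_last_not_N {P₁ P₂ P₃ : List MStep} (hd : IsDyck P₂) (hp : IsPrimitive P₂)
   
    (hEq : typeRaw (P₁ ++ [MStep.E] ++ P₂ ++ P₃) = typeRaw (P₁ ++ P₂ ++ [MStep.E] ++ P₃)) :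
    P₁.getLast? ≠ some MStep.N := by
  intro hlN
  obtain ⟨h1, h2⟩ := cover_typeRaw_eqs (P₁ := P₁) (P₃ := P₃) hd hp
  rw [h1, h2] at hEq
  have hlen := typeRawF_length P₁ (some MStep.E) (some MStep.N)
  have hAB := (List.append_inj hEq hlen).1
  have hE := typeRawF_getLast hlN (some MStep.E)
  have hN := typeRawF_getLast hlN (some MStep.N)
  rw [hAB, hN] at hE
  simp at hE
-- batch 7: NNN avoidance is readable from typeRaw
theorem nnn_iff : ∀ p : List MStep, MStep.D ∉ p → p.getLast? ≠ some MStep.N →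
    ([MStep.N, MStep.N, MStep.N] <:+: p ↔ [MStep.E, MStep.E] <:+: typeRaw p)
  | [], _, _ => by simp [typeRaw]
  | .D :: r, hD, _ => absurd (by simp) hD
  | .E :: r, hD, hL => by
    have ih := nnn_iff r (fun h => hD (by simp [h]))
      (by cases r with
        | nil => simp
        | cons y s => exact getLast?_ne_tail (by simp) hL)
    simp only [typeRaw, List.infix_cons_iff (a := MStep.E), List.cons_prefix_cons]
    simp [ih]
  | [.N], _, hL => absurd rfl hL
  | .N :: .D :: r, hD, _ => absurd (by simp) hD
  | .N :: .E :: r, hD, hL => by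
    have hr : r.getLast? ≠ some MStep.N := by
      cases r with
      | nil => simp
      | cons y s =>
        exact getLast?_ne_tail (by simp) (getLast?_ne_tail (by simp) hL)
    have ih := nnn_iff r (fun h => hD (by simp [h])) hr
    simp only [typeRaw, List.head?, List.infix_cons_iff, List.cons_prefix_cons]
    simp [ih]
  | [.N, .N], _, hL => absurd rfl hL
  | .N :: .N :: .D :: r, hD, _ => absurd (by simp) hD
  | .N :: .N :: .N :: r, _, _ => by
    constructor
    · intro _
      have h1 : typeRaw (MStep.N :: MStep.N :: MStep.N :: r) =
          MStep.E :: MStep.E :: typeRaw (MStep.N :: r) := by simp [typeRaw]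
      rw [h1]
      exact (List.prefix_append [MStep.E, MStep.E] _).isInfix
    · intro _
      exact nnn_prefix_infix
  | .N :: .N :: .E :: r, hD, hL => by
    have hr : r.getLast? ≠ some MStep.N := by
      cases r with
      | nil => simp
      | cons y s =>
        exact getLast?_ne_tail (by simp)
          (getLast?_ne_tail (by simp) (getLast?_ne_tail (by simp) hL))
    have ih := nnn_iff r (fun h => hD (by simp [h])) hr
    simp only [typeRaw, List.head?, List.infix_cons_iff, List.cons_prefix_cons]
    simp [ih]
-- batch 8: Goodness of Dyck paths, phi transfers primitivity, DCover → MCover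
lemma dyck_last_ne_N {p : List MStep} (hp : IsDyck p) : p.getLast? ≠ some MStep.N := by
  obtain ⟨⟨hne, hpre, hz⟩, -⟩ := hp
  intro hlast
  obtain ⟨h, hl⟩ := List.mem_getLast?_eq_getLast
    (show MStep.N ∈ p.getLast? from Option.mem_def.2 hlast)
  have hsplit := List.dropLast_append_getLast h
  have hd : (0:ℤ) ≤ wsum p.dropLast := hpre _ (List.dropLast_prefix p)
  have h2 := congrArg wsum hsplit
  rw [wsum_append, ← hl] at h2
  simp only [wsum_cons, wsum_nil, MStep.hdiff, hz] at h2
  omega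

lemma dyck_goodP {p : List MStep} (hp : IsDyck p) (ha : AvoidsNNN p) : GoodP p :=
  ⟨hp.2, ha, dyck_last_ne_N hp⟩

lemma goodE : GoodP [MStep.E] :=
  ⟨by simp, fun h => by simpa using h.length_le, by simp⟩

lemma dyck_head_N {p : List MStep} (hp : IsDyck p) : p.head? = some MStep.N := by
  obtain ⟨⟨hne, hpre, hz⟩, hnoD⟩ := hp
  cases p with
  | nil => exact absurd rfl hne
  | cons x t =>
    have h1 : [x] <+: x :: t := ⟨t, rfl⟩
    have := hpre _ h1
    cases x <;> simp [wsum, MStep.hdiff] at this hnoD ⊢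

lemma phi_primitive {p : List MStep} (hd : IsDyck p) (hp : IsPrimitive p) (ha : AvoidsNNN p) :
    IsMotzkin (phi p) ∧ IsPrimitive (phi p) := by
  have hg : GoodP p := dyck_goodP hd ha
  have hpsiphi : psi (phi p) = p := psi_phi p hg
  obtain ⟨⟨hne, hpre, hz⟩, hprim⟩ := hp
  have hmot : IsMotzkin (phi p) := by
    refine ⟨?_, ?_, ?_⟩
    · intro h
      rw [h] at hpsiphi
      exact hne (by simpa [psi] using hpsiphi.symm)
    · intro q hq
      have h1 : psi q <+: p := hpsiphi ▸ psi_prefix_mono hq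
      rw [← wsum_psi q]
      exact hpre _ h1
    · rw [← wsum_psi, hpsiphi]; exact hz
  refine ⟨hmot, hmot, ?_⟩
  intro q hq hqne hqfull
  have h1 : psi q <+: p := hpsiphi ▸ psi_prefix_mono hq
  rw [← wsum_psi q]
  refine hprim _ h1 (by simpa using hqne) ?_
  intro h
  exact hqfull (psi_inj (by rw [hpsiphi, h]))

lemma dcover_mcover {T U : List MStep} (hT : IsDyck T) (hTa : AvoidsNNN T) (h : DCover T U)
    (hEq : typeRaw T = typeRaw U) : MCover (phi T) (phi U) := by
  obtain ⟨P₁, P₂, P₃, hdy, hprim, rfl, rfl⟩ := h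
  have hnoD := hT.2
  simp only [List.mem_append, not_or] at hnoD
  obtain ⟨⟨⟨hD1, -⟩, hD2⟩, hD3⟩ := hnoD
  have hP₁last : P₁.getLast? ≠ some MStep.N := cover_last_not_N hdy hprim hEq
  have g1 : GoodP P₁ := ⟨hD1, avoids_of_infix ⟨[], [MStep.E] ++ P₂ ++ P₃, by simp [List.append_assoc]⟩ hTa, hP₁last⟩
  have g2 : GoodP P₂ := by
    refine ⟨hD2, avoids_of_infix ⟨P₁ ++ [MStep.E], P₃, by simp [List.append_assoc]⟩ hTa, ?_⟩
    rw [(prim_struct hdy hprim).2]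
    simp
  have g3 : GoodP P₃ := by
    refine ⟨hD3, avoids_of_infix ⟨P₁ ++ [MStep.E] ++ P₂, [], by simp⟩ hTa, ?_⟩
    cases hP₃ : P₃ with
    | nil => simp
    | cons y s =>
      have := dyck_last_ne_N hT
      rwa [List.getLast?_append_of_ne_nil _ (by simp [hP₃]), hP₃] at this
  have hphiE : phi [MStep.E] = [MStep.E] := rfl
  have e1 : phi (P₁ ++ [MStep.E] ++ P₂ ++ P₃) =
      phi P₁ ++ ([MStep.E] ++ (phi P₂ ++ phi P₃)) := by
    rw [show P₁ ++ [MStep.E] ++ P₂ ++ P₃ = P₁ ++ ([MStep.E] ++ (P₂ ++ P₃)) by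
      simp [List.append_assoc]]
    rw [phi_split g1 (goodP_append goodE (goodP_append g2 g3)),
      phi_split goodE (goodP_append g2 g3), phi_split g2 g3, hphiE]
  have e2 : phi (P₁ ++ P₂ ++ [MStep.E] ++ P₃) =
      phi P₁ ++ (phi P₂ ++ ([MStep.E] ++ phi P₃)) := by
    rw [show P₁ ++ P₂ ++ [MStep.E] ++ P₃ = P₁ ++ (P₂ ++ ([MStep.E] ++ P₃)) by
      simp [List.append_assoc]]
    rw [phi_split g1 (goodP_append g2 (goodP_append goodE g3)),
      phi_split g2 (goodP_append goodE g3), phi_split goodE g3, hphiE]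
  obtain ⟨hmot, hprim'⟩ := phi_primitive hdy hprim g2.2.1
  exact ⟨phi P₁, phi P₂, phi P₃, hmot, hprim', by rw [e1]; simp [List.append_assoc],
    by rw [e2]; simp [List.append_assoc]⟩
-- batch 9: final assembly pieces
lemma mcover_tproj {P Q : List MStep} (h : MCover P Q) : tproj P = tproj Q := by
  obtain ⟨P₁, P₂, P₃, -, -, rfl, rfl⟩ := h
  simp [tproj_append, tproj]

lemma mle_tproj {P Q : List MStep} (h : MLE P Q) : tproj P = tproj Q := by
  induction h with
  | refl => rfl
  | tail _ hcov ih => exact ih.trans (mcover_tproj hcov)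

lemma typeRaw_eq_nil {p : List MStep} : typeRaw p = [] ↔ MStep.N ∉ p := by
  rw [typeRaw_eq_typeRawF, typeRawF_eq_nil]

lemma typeRaw_getLast : ∀ p : List MStep, MStep.D ∉ p → p.getLast? ≠ some MStep.N →
    MStep.N ∈ p → (typeRaw p).getLast? = some MStep.N := by
  intro p
  induction p with
  | nil => intro _ _ h; simp at h
  | cons x r ih =>
    intro hD hL hN
    cases x with
    | D => exact absurd (by simp) hD
    | E =>
      have hNr : MStep.N ∈ r := by simpa using hN
      have hrne : r ≠ [] := by rintro rfl; simp at hNr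
      exact ih (fun h => hD (by simp [h])) (getLast?_ne_tail hrne hL) hNr
    | N =>
      by_cases hNr : MStep.N ∈ r
      · have hrne : r ≠ [] := by rintro rfl; simp at hNr
        have h1 := ih (fun h => hD (by simp [h])) (getLast?_ne_tail hrne hL) hNr
        have h2 : typeRaw r ≠ [] := by rw [Ne, typeRaw_eq_nil]; simpa using hNr
        show ((if r.head? = some MStep.E then MStep.N else MStep.E) :: typeRaw r).getLast?
          = some MStep.N
        rw [show ((if r.head? = some MStep.E then MStep.N else MStep.E) :: typeRaw r)
          = [(if r.head? = some MStep.E then MStep.N else MStep.E)] ++ typeRaw r from rfl,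
          List.getLast?_append_of_ne_nil _ h2]
        exact h1
      · have h2 : typeRaw r = [] := typeRaw_eq_nil.2 hNr
        cases r with
        | nil => exact absurd rfl hL
        | cons y s =>
          have hy : y = MStep.E := by
            cases y with
            | N => exact absurd (by simp) hNr
            | D => exact absurd (by simp) hD
            | E => rfl
          subst hy
          show ((if (MStep.E :: s).head? = some MStep.E then MStep.N else MStep.E)
            :: typeRaw (MStep.E :: s)).getLast? = some MStep.N
          rw [show typeRaw (MStep.E :: s) = typeRaw s from rfl]
          rw [show typeRaw s = [] from by
            rw [typeRaw_eq_nil]; intro hc; exact hNr (by simp [hc])]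
          simp

lemma dyck_N_mem {p : List MStep} (hp : IsDyck p) : MStep.N ∈ p := by
  have := dyck_head_N hp
  cases p with
  | nil => simp at this
  | cons x t => simp at this; simp [this]

lemma typeRaw_eq_of_typeW {R S : List MStep} (hR : IsDyck R) (hS : IsDyck S)
    (hW : typeW R = typeW S) : typeRaw R = typeRaw S := by
  have gR := typeRaw_getLast R hR.2 (dyck_last_ne_N hR) (dyck_N_mem hR)
  have gS := typeRaw_getLast S hS.2 (dyck_last_ne_N hS) (dyck_N_mem hS)
  have eR := List.dropLast_append_getLast? _ (Option.mem_def.2 gR)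
  have eS := List.dropLast_append_getLast? _ (Option.mem_def.2 gS)
  rw [← eR, ← eS]
  show typeW R ++ [MStep.N] = typeW S ++ [MStep.N]
  rw [hW]

lemma conv_main {S : List MStep} (hS : IsDyck S) (hSa : AvoidsNNN S) :
    ∀ {T : List MStep}, DLE T S → IsDyck T → AvoidsNNN T → typeRaw T = typeRaw S →
      MLE (phi T) (phi S) := by
  intro T h
  induction h using Relation.ReflTransGen.head_induction_on with
  | refl => intro _ _ _; exact Relation.ReflTransGen.refl
  | @head a c hTU hUS ih =>
    intro hT hTa hEq
    have hU := dyck_of_dcover hT hTU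
    have hle1 := dle_typeRaw_le hUS
    have hle2 := dcover_typeRaw_le hTU
    rw [hEq] at hle2
    have hUS_eq := leT_antisymm hle2 hle1
    have hTU_eq := hEq.trans hUS_eq.symm
    have hUa : AvoidsNNN c := by
      intro hbad
      have h1 := (nnn_iff _ hU.2 (dyck_last_ne_N hU)).1 hbad
      rw [← hTU_eq] at h1
      exact hTa ((nnn_iff _ hT.2 (dyck_last_ne_N hT)).2 h1)
    exact Relation.ReflTransGen.head (dcover_mcover hT hTa hTU hTU_eq) (ih hU hUa hUS_eq)


/-- For Dyck paths `R, S` of the same length `2n` avoiding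
`NNN`, one has `φ R ≤_M φ S` iff `R ≤_D S` in the Tamari order and
`Type(R) = Type(S)`. -/
theorem phi_order_iff (n : ℕ) (R S : List MStep)
    (hR : IsDyck R) (hS : IsDyck S)
    (hRn : R.length = 2 * n) (hSn : S.length = 2 * n)
    (hRa : AvoidsNNN R) (hSa : AvoidsNNN S) :
    MLE (phi R) (phi S) ↔ (DLE R S ∧ typeW R = typeW S) := by
  have hpR : psi (phi R) = R := psi_phi R (dyck_goodP hR hRa)
  have hpS : psi (phi S) = S := psi_phi S (dyck_goodP hS hSa)
  constructor
  · intro h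
    constructor
    · have h1 : Relation.ReflTransGen DCover (psi (phi R)) (psi (phi S)) :=
        Relation.ReflTransGen.lift psi (fun a b hab => mcover_dcover hab) _ _ h
      rw [hpR, hpS] at h1
      exact h1
    · have h1 : typeRaw R = typeRaw S := by
        rw [← hpR, ← hpS, typeRaw_psi, typeRaw_psi, mle_tproj h]
      simp [typeW, h1]
  · rintro ⟨hd, ht⟩
    exact conv_main hS hSa hd hR hRa (typeRaw_eq_of_typeW hR hS ht)
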